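/- If a group H with finite symmetric generating set S has purely exponential growth, i.e. there exist C > 0 and ω > 0 with (1/C)·exp(nω) ≤ #(S^{≤n}) ≤ C·exp(nω) for all n ≥ 1, then setting T_n := S^{≤n} (which is also a finite symmetric generating set), the ratio ω(H, T_n)/log(#T_n) tends to 1 as n → ∞. -/

import Mathlib

open Filter Topology

def wordBall {H : Type*} [Group H] (S : Set H) (n : ℕ) : Set H :=
  {h | ∃ l : List H, l.length ≤ n ∧ (∀ x ∈ l, x ∈ S) ∧ l.prod = h}

lemma wordBall_mono {H : Type*} [Group H] (S : Set H) {n m : ℕ} (h : n ≤ m) :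
    wordBall S n ⊆ wordBall S m := by
  rintro x ⟨l, h1, h2, rfl⟩
  exact ⟨l, h1.trans h, h2, rfl⟩

lemma prod_mem_wordBall {H : Type*} [Group H] (S : Set H) (n : ℕ) (l : List H)
    (hl : ∀ x ∈ l, x ∈ wordBall S n) : l.prod ∈ wordBall S (n * l.length) := by
  induction l with
  | nil => exact ⟨[], by simp, by simp, by simp⟩
  | cons a t ih =>
    obtain ⟨la, hla, hamem, haprod⟩ := hl a List.mem_cons_self
    obtain ⟨lt, hlt, htmem, htprod⟩ := ih (fun x hx => hl x (List.mem_cons_of_mem a hx))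
    refine ⟨la ++ lt, ?_, ?_, ?_⟩
    · calc (la ++ lt).length = la.length + lt.length := List.length_append
        _ ≤ n + n * t.length := add_le_add hla hlt
        _ = n * (a :: t).length := by simp [List.length_cons]; ring
    · intro x hx
      rcases List.mem_append.mp hx with h | h
      · exact hamem x h
      · exact htmem x h
    · rw [List.prod_append, haprod, htprod, List.prod_cons]

lemma wordBall_wordBall {H : Type*} [Group H] (S : Set H) (n m : ℕ) :
    wordBall (wordBall S n) m = wordBall S (n * m) := by
  ext h
  constructor
  · rintro ⟨l, hlen, hmem, rfl⟩
    exact wordBall_mono S (Nat.mul_le_mul_left n hlen) (prod_mem_wordBall S n l hmem)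
  · induction m generalizing h with
    | zero =>
      rintro ⟨l, hlen, hmem, rfl⟩
      have : l = [] := List.length_eq_zero_iff.mp (Nat.le_zero.mp (by simpa using hlen))
      subst this
      exact ⟨[], by simp, by simp, by simp⟩
    | succ m ih =>
      rintro ⟨l, hlen, hmem, rfl⟩
      have hd : (l.drop n).length ≤ n * m := by
        rw [List.length_drop]
        have h2 : l.length ≤ n * m + n := by
          calc l.length ≤ n * (m + 1) := hlen
            _ = n * m + n := by ring
        omega
      have h1 : (l.drop n).prod ∈ wordBall (wordBall S n) m :=
        ih _ ⟨l.drop n, hd, fun x hx => hmem x (List.mem_of_mem_drop hx), rfl⟩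
      obtain ⟨L, hL, hLmem, hLprod⟩ := h1
      refine ⟨(l.take n).prod :: L, by simpa using Nat.succ_le_succ hL, ?_, ?_⟩
      · intro x hx
        rcases List.mem_cons.mp hx with h | h
        · subst h
          exact ⟨l.take n, by simpa using List.length_take_le n l,
            fun y hy => hmem y (List.mem_of_mem_take hy), rfl⟩
        · exact hLmem x h
      · rw [List.prod_cons, hLprod, ← List.prod_append, List.take_append_drop]

theorem stmt2 {H : Type*} [Group H] (S : Set H) (hfin : S.Finite)
    (hsymm : ∀ s ∈ S, s⁻¹ ∈ S) (hgen : Subgroup.closure S = ⊤)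
    (hpure : ∃ C > (0 : ℝ), ∃ w > (0 : ℝ), ∀ n : ℕ, 1 ≤ n →
      (1 / C) * Real.exp (n * w) ≤ (Nat.card (wordBall S n) : ℝ) ∧
      (Nat.card (wordBall S n) : ℝ) ≤ C * Real.exp (n * w))
    (W : ℕ → ℝ)
    (hW : ∀ n : ℕ, 1 ≤ n →
      Tendsto (fun m : ℕ => Real.log (Nat.card (wordBall (wordBall S n) m)) / m)
        atTop (𝓝 (W n))) :
    Tendsto (fun n : ℕ => W n / Real.log (Nat.card (wordBall S n))) atTop (𝓝 1) := by
  obtain ⟨C, hC, w, hw, hbound⟩ := hpure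
  set D : ℝ := max C 1 with hD
  have hD1 : (1 : ℝ) ≤ D := le_max_right _ _
  have hDpos : (0 : ℝ) < D := lt_of_lt_of_le one_pos hD1
  have hCD : C ≤ D := le_max_left _ _
  have hlogD : 0 ≤ Real.log D := Real.log_nonneg hD1
  -- key log bounds
  have key : ∀ k : ℕ, 1 ≤ k →
      (k : ℝ) * w - Real.log D ≤ Real.log (Nat.card (wordBall S k)) ∧
      Real.log (Nat.card (wordBall S k)) ≤ (k : ℝ) * w + Real.log D := by
    intro k hk
    obtain ⟨h1, h2⟩ := hbound k hk
    have hlow : (1 / D) * Real.exp (k * w) ≤ (Nat.card (wordBall S k) : ℝ) := by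
      refine le_trans ?_ h1
      have : (1 : ℝ) / D ≤ 1 / C := one_div_le_one_div_of_le hC hCD
      exact mul_le_mul_of_nonneg_right this (Real.exp_nonneg _)
    have hpos : (0 : ℝ) < (Nat.card (wordBall S k) : ℝ) :=
      lt_of_lt_of_le (by positivity) hlow
    have hhigh : (Nat.card (wordBall S k) : ℝ) ≤ D * Real.exp (k * w) :=
      h2.trans (mul_le_mul_of_nonneg_right hCD (Real.exp_nonneg _))
    constructor
    · have hl := Real.log_le_log (by positivity) hlow
      rw [Real.log_mul (by positivity) (Real.exp_ne_zero _), Real.log_exp,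
        one_div, Real.log_inv] at hl
      linarith
    · have hl := Real.log_le_log hpos hhigh
      rw [Real.log_mul (ne_of_gt hDpos) (Real.exp_ne_zero _), Real.log_exp] at hl
      linarith
  -- W n = n * w for n ≥ 1
  have hWeq : ∀ n : ℕ, 1 ≤ n → W n = (n : ℝ) * w := by
    intro n hn
    have hWn := hW n hn
    simp only [wordBall_wordBall] at hWn
    have hzero : Tendsto (fun m : ℕ => Real.log D / (m : ℝ)) atTop (𝓝 0) :=
      Tendsto.div_atTop tendsto_const_nhds tendsto_natCast_atTop_atTop
    have hlower : Tendsto (fun m : ℕ => (n : ℝ) * w - Real.log D / m) atTop (𝓝 ((n : ℝ) * w)) := by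
      simpa using tendsto_const_nhds.sub hzero
    have hupper : Tendsto (fun m : ℕ => (n : ℝ) * w + Real.log D / m) atTop (𝓝 ((n : ℝ) * w)) := by
      simpa using tendsto_const_nhds.add hzero
    have hmain : Tendsto (fun m : ℕ => Real.log (Nat.card (wordBall S (n * m))) / m)
        atTop (𝓝 ((n : ℝ) * w)) := by
      refine tendsto_of_tendsto_of_tendsto_of_le_of_le' hlower hupper ?_ ?_
      · filter_upwards [eventually_ge_atTop 1] with m hm
        have hk : 1 ≤ n * m := Nat.one_le_iff_ne_zero.mpr (by positivity)
        obtain ⟨hl, _⟩ := key (n * m) hk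
        have hm0 : (0 : ℝ) < (m : ℝ) := by exact_mod_cast hm
        push_cast at hl
        have e : (n : ℝ) * w - Real.log D / m
            = ((n : ℝ) * m * w - Real.log D) / m := by
          field_simp
        rw [e]
        gcongr
      · filter_upwards [eventually_ge_atTop 1] with m hm
        have hk : 1 ≤ n * m := Nat.one_le_iff_ne_zero.mpr (by positivity)
        obtain ⟨_, hu⟩ := key (n * m) hk
        have hm0 : (0 : ℝ) < (m : ℝ) := by exact_mod_cast hm
        push_cast at hu
        have e : (n : ℝ) * w + Real.log D / m
            = ((n : ℝ) * m * w + Real.log D) / m := by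
          field_simp
        rw [e]
        gcongr
    exact tendsto_nhds_unique hWn hmain
  -- ratio of log card to n*w tends to 1
  have hzero : Tendsto (fun n : ℕ => Real.log D / ((n : ℝ) * w)) atTop (𝓝 0) := by
    apply Tendsto.div_atTop tendsto_const_nhds
    exact Tendsto.atTop_mul_const hw tendsto_natCast_atTop_atTop
  have hratio : Tendsto (fun n : ℕ => Real.log (Nat.card (wordBall S n)) / ((n : ℝ) * w))
      atTop (𝓝 1) := by
    have hlower : Tendsto (fun n : ℕ => 1 - Real.log D / ((n : ℝ) * w)) atTop (𝓝 1) := by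
      simpa using tendsto_const_nhds.sub hzero
    have hupper : Tendsto (fun n : ℕ => 1 + Real.log D / ((n : ℝ) * w)) atTop (𝓝 1) := by
      simpa using tendsto_const_nhds.add hzero
    refine tendsto_of_tendsto_of_tendsto_of_le_of_le' hlower hupper ?_ ?_
    · filter_upwards [eventually_ge_atTop 1] with n hn
      obtain ⟨hl, _⟩ := key n hn
      have hn0 : (0 : ℝ) < (n : ℝ) * w := by
        have : (1 : ℝ) ≤ (n : ℝ) := by exact_mod_cast hn
        nlinarith
      have e : 1 - Real.log D / ((n : ℝ) * w)
          = ((n : ℝ) * w - Real.log D) / ((n : ℝ) * w) := by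
        field_simp
      rw [e]
      gcongr
    · filter_upwards [eventually_ge_atTop 1] with n hn
      obtain ⟨_, hu⟩ := key n hn
      have hn0 : (0 : ℝ) < (n : ℝ) * w := by
        have : (1 : ℝ) ≤ (n : ℝ) := by exact_mod_cast hn
        nlinarith
      have e : 1 + Real.log D / ((n : ℝ) * w)
          = ((n : ℝ) * w + Real.log D) / ((n : ℝ) * w) := by
        field_simp
      rw [e]
      gcongr
  have hinv : Tendsto (fun n : ℕ =>
      (Real.log (Nat.card (wordBall S n)) / ((n : ℝ) * w))⁻¹) atTop (𝓝 1) := by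
    simpa using hratio.inv₀ one_ne_zero
  refine hinv.congr' ?_
  filter_upwards [eventually_ge_atTop 1] with n hn
  rw [inv_div, hWeq n hn]
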